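/- Under mutual incoherence with parameters α > 1 and s ≥ 1, and the cone condition ‖Δ_{S*ᶜ}‖_{2,1} ≤ 3‖Δ_{S*}‖_{2,1} with |S*| ≤ s, the sup-norm bound ‖Δ‖_{2,∞} ≤ (1 + 16/(7(α−1)))·‖ΨΔ‖_{2,∞} holds. -/

import Mathlib

open scoped BigOperators
open Matrix Classical

/-- Euclidean norm of a row. -/
noncomputable def rowNorm {q : ℕ} (v : Fin q → ℝ) : ℝ := Real.sqrt (∑ j, (v j) ^ 2)

/-- `ℓ_{2,1}` norm: sum of row Euclidean norms. -/
noncomputable def norm21 {p q : ℕ} (B : Matrix (Fin p) (Fin q) ℝ) : ℝ :=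
  ∑ j, rowNorm (B j)

/-- `ℓ_{2,∞}` norm: maximum of row Euclidean norms. -/
noncomputable def norm2inf {p q : ℕ} (B : Matrix (Fin p) (Fin q) ℝ) : ℝ :=
  ⨆ j, rowNorm (B j)

/-- Frobenius norm of a real matrix. -/
noncomputable def frob {n q : ℕ} (Z : Matrix (Fin n) (Fin q) ℝ) : ℝ :=
  Real.sqrt (∑ i, ∑ j, (Z i j) ^ 2)

/-- Restriction of a matrix to a set of rows (zero outside `S`). -/
noncomputable def restrict {p q : ℕ} (B : Matrix (Fin p) (Fin q) ℝ) (S : Set (Fin p)) :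
    Matrix (Fin p) (Fin q) ℝ :=
  fun j k => if j ∈ S then B j k else 0

/-- Mutual incoherence of the Gram matrix `Ψ = XᵀX/n`. -/
def MutualIncoherence {p : ℕ} (Ψ : Matrix (Fin p) (Fin p) ℝ) (α : ℝ) (s : ℕ) : Prop :=
  (∀ j, Ψ j j = 1) ∧ ∀ j j' : Fin p, j ≠ j' → |Ψ j j'| ≤ 1 / (7 * α * s)

lemma rowNorm_eq {q : ℕ} (v : Fin q → ℝ) :
    rowNorm v = ‖(WithLp.equiv 2 (Fin q → ℝ)).symm v‖ := by
  rw [EuclideanSpace.norm_eq]; simp [rowNorm, sq_abs]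

lemma rowNorm_nonneg {q : ℕ} (v : Fin q → ℝ) : 0 ≤ rowNorm v := Real.sqrt_nonneg _

lemma main_aux {p q : ℕ} (Ψ : Matrix (Fin p) (Fin p) ℝ) (α : ℝ) (hα : 1 < α)
    (s : ℕ) (hs : 1 ≤ s) (hinc : MutualIncoherence Ψ α s)
    (Sstar : Set (Fin p)) (hcard : Sstar.ncard ≤ s)
    (Δ : Matrix (Fin p) (Fin q) ℝ)
    (hcone : norm21 (restrict Δ Sstarᶜ) ≤ 3 * norm21 (restrict Δ Sstar)) :
    norm2inf Δ ≤ (1 + 16 / (7 * (α - 1))) * norm2inf (Ψ * Δ) := by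
  have hα0 : (0:ℝ) < α := lt_trans one_pos hα
  have hs0 : (0:ℝ) < s := by exact_mod_cast Nat.lt_of_lt_of_le Nat.zero_lt_one hs
  rcases Nat.eq_zero_or_pos p with hp | hp
  · subst hp
    have h1 : norm2inf Δ = 0 := Real.iSup_of_isEmpty _
    have h2 : norm2inf (Ψ * Δ) = 0 := Real.iSup_of_isEmpty _
    rw [h1, h2, mul_zero]
  haveI : Nonempty (Fin p) := ⟨⟨0, hp⟩⟩
  set D := norm2inf Δ with hD
  set M := norm2inf (Ψ * Δ) with hM
  have hbddΔ : BddAbove (Set.range fun j => rowNorm (Δ j)) := Set.Finite.bddAbove (Set.finite_range _)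
  have hbddM : BddAbove (Set.range fun j => rowNorm ((Ψ * Δ) j)) := Set.Finite.bddAbove (Set.finite_range _)
  have hrowD : ∀ j, rowNorm (Δ j) ≤ D := fun j => le_ciSup hbddΔ j
  have hrowM : ∀ j, rowNorm ((Ψ * Δ) j) ≤ M := fun j => le_ciSup hbddM j
  have hD0 : 0 ≤ D := le_trans (rowNorm_nonneg _) (hrowD ⟨0, hp⟩)
  have hM0 : 0 ≤ M := le_trans (rowNorm_nonneg _) (hrowM ⟨0, hp⟩)
  -- norm21 of restriction to Sstar ≤ s * D
  have hrest : norm21 (restrict Δ Sstar) ≤ s * D := by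
    have : norm21 (restrict Δ Sstar) = ∑ j ∈ Sstar.toFinset, rowNorm (Δ j) := by
      rw [norm21, ← Finset.sum_filter_add_sum_filter_not Finset.univ (· ∈ Sstar)]
      have h1 : ∀ j ∈ Finset.univ.filter (· ∈ Sstar), rowNorm (restrict Δ Sstar j) = rowNorm (Δ j) := by
        intro j hj
        simp only [Finset.mem_filter] at hj
        congr 1
        funext k
        simp [restrict, hj.2]
      have h2 : ∀ j ∈ Finset.univ.filter (¬ · ∈ Sstar), rowNorm (restrict Δ Sstar j) = 0 := by
        intro j hj
        simp only [Finset.mem_filter] at hj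
        have : restrict Δ Sstar j = fun _ => 0 := by funext k; simp [restrict, hj.2]
        rw [this]; simp [rowNorm]
      rw [Finset.sum_congr rfl h1, Finset.sum_congr rfl h2, Finset.sum_const_zero, add_zero]
      apply Finset.sum_congr _ (fun _ _ => rfl)
      ext j; simp
    rw [this]
    calc ∑ j ∈ Sstar.toFinset, rowNorm (Δ j) ≤ ∑ _j ∈ Sstar.toFinset, D :=
          Finset.sum_le_sum (fun j _ => hrowD j)
      _ = Sstar.toFinset.card * D := by rw [Finset.sum_const, nsmul_eq_mul]
      _ ≤ s * D := by
          apply mul_le_mul_of_nonneg_right _ hD0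
          have : Sstar.toFinset.card = Sstar.ncard := (Set.ncard_eq_toFinset_card' _).symm
          exact_mod_cast this ▸ hcard
  -- norm21 Δ ≤ 4 s D
  have hsplit : norm21 Δ = norm21 (restrict Δ Sstar) + norm21 (restrict Δ Sstarᶜ) := by
    rw [norm21, norm21, norm21, ← Finset.sum_add_distrib]
    apply Finset.sum_congr rfl
    intro j _
    by_cases hj : j ∈ Sstar
    · have h1 : restrict Δ Sstar j = Δ j := by funext k; simp [restrict, hj]
      have h2 : restrict Δ Sstarᶜ j = fun _ => 0 := by funext k; simp [restrict, hj]
      rw [h1, h2]; simp [rowNorm]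
    · have h1 : restrict Δ Sstar j = fun _ => 0 := by funext k; simp [restrict, hj]
      have h2 : restrict Δ Sstarᶜ j = Δ j := by funext k; simp [restrict, hj]
      rw [h1, h2]; simp [rowNorm]
  have h21 : norm21 Δ ≤ 4 * (s * D) := by
    rw [hsplit]
    nlinarith [hcone, hrest]
  -- row inequality
  have hrow : ∀ j, rowNorm (Δ j) ≤ M + (1 / (7 * α * s)) * norm21 Δ := by
    intro j
    set e := (WithLp.equiv 2 (Fin q → ℝ)).symm with he
    have hlin : ∀ (a b : Fin q → ℝ), e (a - b) = e a - e b := fun a b => rfl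
    have hsmul : ∀ (c : ℝ) (a : Fin q → ℝ), e (c • a) = c • e a := fun c a => rfl
    have key : Δ j = (Ψ * Δ) j - ∑ j' ∈ Finset.univ.erase j, Ψ j j' • Δ j' := by
      have : (Ψ * Δ) j = ∑ j', Ψ j j' • Δ j' := by
        funext k
        simp [Matrix.mul_apply, Finset.sum_apply]
      rw [this, ← Finset.add_sum_erase _ _ (Finset.mem_univ j), hinc.1 j, one_smul]
      abel
    have : rowNorm (Δ j) ≤ rowNorm ((Ψ * Δ) j) + ∑ j' ∈ Finset.univ.erase j, |Ψ j j'| * rowNorm (Δ j') := by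
      rw [rowNorm_eq, key]
      calc ‖e ((Ψ * Δ) j - ∑ j' ∈ Finset.univ.erase j, Ψ j j' • Δ j')‖
          = ‖e ((Ψ * Δ) j) - ∑ j' ∈ Finset.univ.erase j, Ψ j j' • e (Δ j')‖ := by
            rw [hlin]
            congr 1
            ext k; simp [he]
        _ ≤ ‖e ((Ψ * Δ) j)‖ + ‖∑ j' ∈ Finset.univ.erase j, Ψ j j' • e (Δ j')‖ := norm_sub_le _ _
        _ ≤ ‖e ((Ψ * Δ) j)‖ + ∑ j' ∈ Finset.univ.erase j, ‖Ψ j j' • e (Δ j')‖ := by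
            gcongr; exact norm_sum_le _ _
        _ = rowNorm ((Ψ * Δ) j) + ∑ j' ∈ Finset.univ.erase j, |Ψ j j'| * rowNorm (Δ j') := by
            rw [← rowNorm_eq]
            congr 1
            apply Finset.sum_congr rfl
            intro j' _
            rw [norm_smul, Real.norm_eq_abs, ← rowNorm_eq]
    refine this.trans ?_
    gcongr
    · exact hrowM j
    calc ∑ j' ∈ Finset.univ.erase j, |Ψ j j'| * rowNorm (Δ j')
        ≤ ∑ j' ∈ Finset.univ.erase j, (1 / (7 * α * s)) * rowNorm (Δ j') := by
          apply Finset.sum_le_sum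
          intro j' hj'
          exact mul_le_mul_of_nonneg_right (hinc.2 j j' (Finset.ne_of_mem_erase hj').symm) (rowNorm_nonneg _)
      _ ≤ ∑ j', (1 / (7 * α * s)) * rowNorm (Δ j') := by
          apply Finset.sum_le_sum_of_subset_of_nonneg (Finset.erase_subset _ _)
          intro j' _ _
          have h7 : (0:ℝ) < 7 * α * s := by
            apply mul_pos (mul_pos (by norm_num) hα0) hs0
          exact mul_nonneg (le_of_lt (by positivity)) (rowNorm_nonneg _)
      _ = (1 / (7 * α * s)) * norm21 Δ := by rw [norm21, Finset.mul_sum]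
  -- combine
  have hkey : D ≤ M + (4 / (7 * α)) * D := by
    have : ∀ j, rowNorm (Δ j) ≤ M + (4 / (7 * α)) * D := by
      intro j
      refine (hrow j).trans ?_
      have : (1 / (7 * α * s)) * norm21 Δ ≤ (1 / (7 * α * s)) * (4 * (s * D)) := by
        apply mul_le_mul_of_nonneg_left h21
        positivity
      refine (by linarith : M + (1 / (7 * α * s)) * norm21 Δ ≤ M + (1 / (7 * α * s)) * (4 * (s * D))).trans ?_
      have heq : (1 / (7 * α * s)) * (4 * (s * D)) = (4 / (7 * α)) * D := by
        field_simp
      rw [heq]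
    exact ciSup_le this
  -- final arithmetic
  have hc : (0:ℝ) < 7 * (α - 1) := by linarith
  have hc2 : (0:ℝ) < 7 * α := by linarith
  have hkey' : D * (7 * α) ≤ (M + (4 / (7 * α)) * D) * (7 * α) :=
    mul_le_mul_of_nonneg_right hkey (le_of_lt hc2)
  have hkey'' : D * (7 * α) ≤ M * (7 * α) + 4 * D := by
    have heq : (M + (4 / (7 * α)) * D) * (7 * α) = M * (7 * α) + 4 * D := by
      field_simp
    linarith [heq ▸ hkey']
  have goal' : D * (7 * (α - 1)) ≤ (7 * α + 9) * M := by
    nlinarith [mul_le_mul_of_nonneg_right hkey'' (by linarith : (0:ℝ) ≤ 7 * α - 7),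
      hM0, hD0, mul_nonneg hM0 (by linarith : (0:ℝ) ≤ 84 * α - 36),
      (by linarith : (0:ℝ) ≤ 7 * α - 4)]
  have hco : 1 + 16 / (7 * (α - 1)) = (7 * α + 9) / (7 * (α - 1)) := by
    rw [eq_div_iff (ne_of_gt hc)]
    field_simp [(by linarith : α - 1 ≠ 0)]
    ring
  rw [hco, div_mul_eq_mul_div, le_div_iff₀ hc]
  linarith

/-- Under mutual incoherence and the cone condition, the sup-norm bound
`‖Δ‖_{2,∞} ≤ (1 + 16/(7(α−1)))·‖ΨΔ‖_{2,∞}` holds. -/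
theorem norm2inf_bound {n p q : ℕ} (hn : 0 < n)
    (X : Matrix (Fin n) (Fin p) ℝ) (α : ℝ) (hα : 1 < α) (s : ℕ) (hs : 1 ≤ s)
    (hinc : MutualIncoherence ((1 / (n : ℝ)) • (Xᵀ * X)) α s)
    (Sstar : Set (Fin p)) (hcard : Sstar.ncard ≤ s)
    (Δ : Matrix (Fin p) (Fin q) ℝ)
    (hcone : norm21 (restrict Δ Sstarᶜ) ≤ 3 * norm21 (restrict Δ Sstar)) :
    norm2inf Δ ≤
      (1 + 16 / (7 * (α - 1))) * norm2inf (((1 / (n : ℝ)) • (Xᵀ * X)) * Δ) := by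
  exact main_aux _ α hα s hs hinc Sstar hcard Δ hcone
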